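/- arXiv:0812.1330 — 2 statements merged into one kernel-verified Lean document; each statement's English description precedes it below -/
import Mathlib

section
/- Let 𝒜 = {A_α : α < ω₂} be a maximal antichain in P(ω₁)/NS, indexed by ordinals below ω₂. Then the set S = {σ ∈ [ω₂]^ω : ω₁ ∈ σ and ∃α ∈ σ such that σ ∩ ω₁ ∈ A_α} is projective stationary: for every stationary B ⊆ ω₁, the set {σ ∈ S : σ ∩ ω₁ ∈ B} is stationary in [ω₂]^ω. -/
/-- The first uncountable ordinal. -/
noncomputable def ω1 : Ordinal.{0} := (Cardinal.aleph 1).ord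
/-- The second uncountable ordinal. -/
noncomputable def ω2 : Ordinal.{0} := (Cardinal.aleph 2).ord

-- The order type of a set of ordinals (correct whenever the set is small, e.g. countable).
open Classical in
noncomputable def otp (σ : Set Ordinal.{0}) : Ordinal.{0} :=
  if h : ∃ o : Ordinal.{0}, Ordinal.lift.{1, 0} o =
      Ordinal.type ((· < ·) : σ → σ → Prop) then h.choose else 0

/-- `σ ∈ [α]^ω`: σ is a countably infinite subset of (the ordinals below) α. -/
def MemCtble (α : Ordinal.{0}) (σ : Set Ordinal.{0}) : Prop :=
  σ.Countable ∧ σ.Infinite ∧ ∀ x ∈ σ, x < α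

/-- `C` is a club subset of `[α]^ω`: all members lie in `[α]^ω`, `C` is closed under
unions of increasing ω-chains, and `C` is cofinal under inclusion. -/
def IsClubIn (α : Ordinal.{0}) (C : Set (Set Ordinal.{0})) : Prop :=
  (∀ σ ∈ C, MemCtble α σ) ∧
  (∀ f : ℕ → Set Ordinal.{0}, (∀ n, f n ∈ C) → (∀ n, f n ⊆ f (n + 1)) →
    (⋃ n, f n) ∈ C) ∧
  (∀ σ, MemCtble α σ → ∃ τ ∈ C, σ ⊆ τ)

/-- `S` is stationary in `[α]^ω`: it meets every club of `[α]^ω`. -/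
def StatIn (α : Ordinal.{0}) (S : Set (Set Ordinal.{0})) : Prop :=
  ∀ C, IsClubIn α C → (S ∩ C).Nonempty

/-- `C` is a closed unbounded subset of the ordinal `κ`. -/
def IsClubBelow (κ : Ordinal.{0}) (C : Set Ordinal.{0}) : Prop :=
  (∀ x ∈ C, x < κ) ∧ (∀ β < κ, ∃ x ∈ C, β ≤ x) ∧
  (∀ S : Set Ordinal.{0}, S ⊆ C → S.Nonempty → sSup S < κ → sSup S ∈ C)

/-- `S` is a stationary subset of the ordinal `κ`: it meets every club of `κ`. -/
def StatBelow (κ : Ordinal.{0}) (S : Set Ordinal.{0}) : Prop :=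
  ∀ C, IsClubBelow κ C → (S ∩ C).Nonempty

/-- The tilde operation: `α ∈ tilde X` iff `ω1 ≤ α < ω2` and
`{σ ∈ [α]^ω : otp σ ∈ X}` contains a club of `[α]^ω`. -/
def tilde (X : Set Ordinal.{0}) : Set Ordinal.{0} :=
  {α | ω1 ≤ α ∧ α < ω2 ∧ ∃ C, IsClubIn α C ∧ C ⊆ {σ | otp σ ∈ X}}

/-- `σ ∩ ω₁` equals the ordinal `γ` (i.e. as sets, `σ ∩ ω₁ = {x : x < γ}`). -/
def MeetO1 (σ : Set Ordinal.{0}) (γ : Ordinal.{0}) : Prop :=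
  σ ∩ Set.Iio ω1 = Set.Iio γ

section Aux

-- auxiliary lemmas
theorem aux_o1_lt_o2 : ω1 < ω2 :=
  Cardinal.ord_lt_ord.mpr (Cardinal.aleph_lt_aleph.mpr one_lt_two)

theorem aux_omega_lt_o1 : Ordinal.omega0 < ω1 := by
  rw [← Cardinal.ord_aleph0]
  exact Cardinal.ord_lt_ord.mpr Cardinal.aleph0_lt_aleph_one

theorem aux_o1_isLimit : Order.IsSuccLimit ω1 :=
  Cardinal.isSuccLimit_ord (Cardinal.aleph0_le_aleph 1)

theorem aux_card_le {γ : Ordinal.{0}} (h : γ < ω1) : γ.card ≤ Cardinal.aleph0 := by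
  have := Cardinal.lt_ord.mp h
  rw [show (1 : Ordinal) = Order.succ 0 by rw [← Ordinal.add_one_eq_succ, zero_add],
    Cardinal.aleph_succ, Cardinal.aleph_zero] at this
  exact Order.lt_succ_iff.mp this

theorem aux_ctble_Iio {γ : Ordinal.{0}} (h : γ < ω1) : (Set.Iio γ).Countable := by
  rw [Cardinal.countable_iff_lt_aleph_one, Ordinal.mk_Iio_ordinal]
  exact Cardinal.lift_lt_aleph_one.mpr (Cardinal.lt_ord.mp h)

theorem aux_sSup_lt {s : Set Ordinal.{0}} (hc : s.Countable) (h : ∀ x ∈ s, x < ω1) :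
    sSup s < ω1 := by
  rcases s.eq_empty_or_nonempty with rfl | hne
  · rw [csSup_empty]
    exact Cardinal.lt_ord.mpr (by simpa using Cardinal.aleph_pos 1)
  · obtain ⟨f, rfl⟩ := hc.exists_eq_range hne
    show (⨆ n, f n) < ω1
    apply Ordinal.iSup_lt_ord _ (fun n => h _ (Set.mem_range_self n))
    show Cardinal.mk ℕ < ((Cardinal.aleph 1).ord).cof
    rw [Cardinal.isRegular_aleph_one.cof_eq]
    simpa using Cardinal.aleph0_lt_aleph_one

noncomputable def del (τ : Set Ordinal.{0}) : Ordinal.{0} := sSup (τ ∩ Set.Iio ω1)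

open Classical in
noncomputable def nxt (C : Set (Set Ordinal.{0})) (τ : Set Ordinal.{0}) : Set Ordinal.{0} :=
  if h : IsClubIn ω2 C ∧ MemCtble ω2 τ then (h.1.2.2 τ h.2).choose else ∅

theorem nxt_spec {C : Set (Set Ordinal.{0})} {τ : Set Ordinal.{0}}
    (hC : IsClubIn ω2 C) (hτ : MemCtble ω2 τ) : nxt C τ ∈ C ∧ τ ⊆ nxt C τ := by
  rw [nxt, dif_pos (⟨hC, hτ⟩ : IsClubIn ω2 C ∧ MemCtble ω2 τ)]
  exact (hC.2.2 τ hτ).choose_spec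

noncomputable def sig (C : Set (Set Ordinal.{0})) (α : Ordinal.{0}) :
    Ordinal.{0} → Set Ordinal.{0} :=
  fun i => Ordinal.limitRecOn i
    (nxt C (Set.Iio Ordinal.omega0 ∪ {ω1, α}))
    (fun _ τ => nxt C (τ ∪ Set.Iic (del τ) ∪ {del τ + 1}))
    (fun i _ IH => ⋃ j : Set.Iio i, IH j.1 j.2)

theorem sig_zero (C α) : sig C α 0 = nxt C (Set.Iio Ordinal.omega0 ∪ {ω1, α}) :=
  Ordinal.limitRecOn_zero _ _ _

theorem sig_succ (C α k) : sig C α (Order.succ k) =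
    nxt C (sig C α k ∪ Set.Iic (del (sig C α k)) ∪ {del (sig C α k) + 1}) :=
  Ordinal.limitRecOn_succ _ _ _ _

theorem sig_limit (C α i) (h : Order.IsSuccLimit i) : sig C α i = ⋃ j : Set.Iio i, sig C α j.1 :=
  Ordinal.limitRecOn_limit _ _ _ _ h

section Main

variable {C : Set (Set Ordinal.{0})} {α : Ordinal.{0}}

theorem aux_bdd (τ : Set Ordinal.{0}) : BddAbove (τ ∩ Set.Iio ω1) :=
  ⟨ω1, fun _ hx => hx.2.le⟩

theorem aux_del_lt {τ : Set Ordinal.{0}} (hτ : τ.Countable) : del τ < ω1 :=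
  aux_sSup_lt (hτ.mono Set.inter_subset_left) (fun _ hx => hx.2)

theorem seed0_mem (hC : IsClubIn ω2 C) (hα : α < ω2) :
    MemCtble ω2 (Set.Iio Ordinal.omega0 ∪ {ω1, α}) := by
  refine ⟨?_, ?_, ?_⟩
  · exact (aux_ctble_Iio aux_omega_lt_o1).union
      ((Set.finite_singleton α).insert ω1).countable
  · apply Set.Infinite.mono Set.subset_union_left
    apply Set.infinite_of_injective_forall_mem (f := fun n : ℕ => (n : Ordinal.{0}))
    · intro a b h
      simpa using h
    · exact fun n => Ordinal.nat_lt_omega0 n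
  · rintro x (hx | (rfl | rfl))
    · exact lt_trans (lt_trans hx aux_omega_lt_o1) aux_o1_lt_o2
    · exact aux_o1_lt_o2
    · exact hα

theorem seed_mem (hC : IsClubIn ω2 C) {τ : Set Ordinal.{0}} (hτ : τ ∈ C) :
    MemCtble ω2 (τ ∪ Set.Iic (del τ) ∪ {del τ + 1}) := by
  obtain ⟨hcnt, hinf, hlt⟩ := hC.1 τ hτ
  have hd : del τ < ω1 := aux_del_lt hcnt
  have hd1 : del τ + 1 < ω1 := by
    rw [Ordinal.add_one_eq_succ]; exact aux_o1_isLimit.succ_lt hd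
  refine ⟨?_, ?_, ?_⟩
  · refine (hcnt.union ?_).union (Set.countable_singleton _)
    have h2 : Set.Iic (del τ) ⊆ Set.Iio (del τ + 1) := fun x hx => by
      rw [Set.mem_Iio, Ordinal.add_one_eq_succ, Order.lt_succ_iff]; exact hx
    exact (aux_ctble_Iio hd1).mono h2
  · exact hinf.mono (Set.subset_union_left.trans Set.subset_union_left)
  · rintro x ((hx | hx) | rfl)
    · exact hlt x hx
    · exact lt_trans (lt_of_le_of_lt hx hd) aux_o1_lt_o2
    · exact lt_trans hd1 aux_o1_lt_o2

theorem sig_step (hC : IsClubIn ω2 C) {k : Ordinal.{0}} (hk : sig C α k ∈ C) :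
    sig C α (Order.succ k) ∈ C ∧
      (sig C α k ∪ Set.Iic (del (sig C α k)) ∪ {del (sig C α k) + 1}) ⊆
        sig C α (Order.succ k) := by
  rw [sig_succ]; exact nxt_spec hC (seed_mem hC hk)

theorem sig_key (hC : IsClubIn ω2 C) (hα : α < ω2) :
    ∀ i, i < ω1 → (sig C α i ∈ C ∧ ∀ j, j < i → sig C α j ⊆ sig C α i) := by
  intro i
  induction i using Ordinal.induction with
  | h i IH =>
  intro hi
  rcases Ordinal.zero_or_succ_or_isSuccLimit i with rfl | ⟨k, rfl⟩ | hlim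
  · refine ⟨?_, fun j hj => absurd hj (not_lt_of_ge (zero_le : (0 : Ordinal.{0}) ≤ j))⟩
    rw [sig_zero]; exact (nxt_spec hC (seed0_mem hC hα)).1
  · have hk1 : k < Order.succ k := Order.lt_succ k
    obtain ⟨hkC, hkmono⟩ := IH k hk1 (hk1.trans hi)
    obtain ⟨h1, h2⟩ := sig_step hC hkC
    refine ⟨h1, fun j hj => ?_⟩
    have hj' : j ≤ k := Order.lt_succ_iff.mp hj
    have hsub : sig C α j ⊆ sig C α k := by
      rcases eq_or_lt_of_le hj' with rfl | h
      · exact subset_rfl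
      · exact hkmono j h
    exact hsub.trans ((Set.subset_union_left.trans Set.subset_union_left).trans h2)
  · have hmono : ∀ j k : Ordinal.{0}, j ≤ k → k < i → sig C α j ⊆ sig C α k := by
      intro j k hjk hki
      rcases eq_or_lt_of_le hjk with rfl | h
      · exact subset_rfl
      · exact (IH k hki (hki.trans hi)).2 j h
    have hUeq : sig C α i = ⋃ j : Set.Iio i, sig C α j.1 := sig_limit C α i hlim
    constructor
    · have hcio : (Set.Iio i).Countable := aux_ctble_Iio hi
      obtain ⟨e, he⟩ := hcio.exists_eq_range ⟨0, hlim.pos⟩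
      have he' : ∀ n, e n < i := fun n => by
        have : e n ∈ Set.Iio i := he ▸ Set.mem_range_self n
        exact this
      let g : ℕ → Ordinal.{0} := fun n => Nat.rec (e 0) (fun m gm => max gm (e (m + 1))) n
      have hgs : ∀ n, g (n + 1) = max (g n) (e (n + 1)) := fun n => rfl
      have hglt : ∀ n, g n < i := by
        intro n; induction n with
        | zero => exact he' 0
        | succ m ih => rw [hgs]; exact max_lt ih (he' (m + 1))
      have hgm : ∀ n, g n ≤ g (n + 1) := fun n => by rw [hgs]; exact le_max_left _ _
      have hge : ∀ n, e n ≤ g n := by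
        intro n; cases n with
        | zero => exact le_rfl
        | succ m => rw [hgs]; exact le_max_right _ _
      have hfC : ∀ n, sig C α (g n) ∈ C := fun n => (IH (g n) (hglt n) ((hglt n).trans hi)).1
      have hch : ∀ n, sig C α (g n) ⊆ sig C α (g (n + 1)) :=
        fun n => hmono _ _ (hgm n) (hglt (n + 1))
      have hu : (⋃ n, sig C α (g n)) ∈ C := hC.2.1 _ hfC hch
      have heq : sig C α i = ⋃ n, sig C α (g n) := by
        rw [hUeq]; apply Set.Subset.antisymm
        · rintro x hx
          simp only [Set.mem_iUnion] at hx ⊢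
          obtain ⟨⟨j, hj⟩, hx⟩ := hx
          have hjr : j ∈ Set.range e := he ▸ hj
          obtain ⟨n, rfl⟩ := hjr
          exact ⟨n, hmono _ _ (hge n) (hglt n) hx⟩
        · rintro x hx
          simp only [Set.mem_iUnion] at hx ⊢
          obtain ⟨n, hx⟩ := hx
          exact ⟨⟨g n, hglt n⟩, hx⟩
      rw [heq]; exact hu
    · intro j hj; rw [hUeq]
      exact Set.subset_iUnion (fun j : Set.Iio i => sig C α j.1) ⟨j, hj⟩

theorem sig_memC (hC : IsClubIn ω2 C) (hα : α < ω2) {i : Ordinal.{0}} (hi : i < ω1) :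
    sig C α i ∈ C := (sig_key hC hα i hi).1

theorem sig_mono (hC : IsClubIn ω2 C) (hα : α < ω2) {j i : Ordinal.{0}}
    (hj : j ≤ i) (hi : i < ω1) : sig C α j ⊆ sig C α i := by
  rcases eq_or_lt_of_le hj with rfl | h
  · exact subset_rfl
  · exact (sig_key hC hα i hi).2 j h

theorem sig_ctble (hC : IsClubIn ω2 C) (hα : α < ω2) {i : Ordinal.{0}} (hi : i < ω1) :
    (sig C α i).Countable := (hC.1 _ (sig_memC hC hα hi)).1

theorem del_lt (hC : IsClubIn ω2 C) (hα : α < ω2) {i : Ordinal.{0}} (hi : i < ω1) :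
    del (sig C α i) < ω1 := aux_del_lt (sig_ctble hC hα hi)

theorem sig_zero_mem (hC : IsClubIn ω2 C) (hα : α < ω2) {i : Ordinal.{0}} (hi : i < ω1) :
    (0 : Ordinal.{0}) ∈ sig C α i ∩ Set.Iio ω1 := by
  refine ⟨sig_mono hC hα (zero_le : (0 : Ordinal.{0}) ≤ i) hi ?_, aux_o1_isLimit.pos⟩
  rw [sig_zero]
  exact (nxt_spec hC (seed0_mem hC hα)).2 (Or.inl Ordinal.omega0_pos)

theorem del_mono (hC : IsClubIn ω2 C) (hα : α < ω2) {j i : Ordinal.{0}}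
    (hj : j ≤ i) (hi : i < ω1) : del (sig C α j) ≤ del (sig C α i) := by
  apply csSup_le_csSup (aux_bdd _) ⟨0, sig_zero_mem hC hα (lt_of_le_of_lt hj hi)⟩
  exact Set.inter_subset_inter_left _ (sig_mono hC hα hj hi)

theorem del_succ (hC : IsClubIn ω2 C) (hα : α < ω2) {i : Ordinal.{0}}
    (hi : Order.succ i < ω1) : del (sig C α i) + 1 ≤ del (sig C α (Order.succ i)) := by
  have hiw : i < ω1 := (Order.lt_succ i).trans hi
  have hmem : del (sig C α i) + 1 ∈ sig C α (Order.succ i) :=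
    (sig_step hC (sig_memC hC hα hiw)).2 (Or.inr rfl)
  have hlt : del (sig C α i) + 1 < ω1 := by
    rw [Ordinal.add_one_eq_succ]; exact aux_o1_isLimit.succ_lt (del_lt hC hα hiw)
  exact le_csSup (aux_bdd _) ⟨hmem, hlt⟩

theorem del_strict (hC : IsClubIn ω2 C) (hα : α < ω2) {i : Ordinal.{0}}
    (hi : Order.succ i < ω1) : del (sig C α i) < del (sig C α (Order.succ i)) :=
  lt_of_lt_of_le (by rw [Ordinal.add_one_eq_succ]; exact Order.lt_succ _) (del_succ hC hα hi)

theorem del_ge (hC : IsClubIn ω2 C) (hα : α < ω2) :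
    ∀ i, i < ω1 → i ≤ del (sig C α i) := by
  intro i
  induction i using Ordinal.induction with
  | h i IH =>
  intro hi
  rcases Ordinal.zero_or_succ_or_isSuccLimit i with rfl | ⟨k, rfl⟩ | hlim
  · exact zero_le
  · have hk : k < ω1 := (Order.lt_succ k).trans hi
    calc Order.succ k ≤ Order.succ (del (sig C α k)) := Order.succ_le_succ (IH k (Order.lt_succ k) hk)
      _ = del (sig C α k) + 1 := (Ordinal.add_one_eq_succ _).symm
      _ ≤ del (sig C α (Order.succ k)) := del_succ hC hα hi
  · rw [Order.IsSuccLimit.le_iff_forall_le hlim]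
    intro b hb
    exact le_trans (IH b hb (hb.trans hi)) (del_mono hC hα hb.le hi)

theorem sig_meet (hC : IsClubIn ω2 C) (hα : α < ω2) {i : Ordinal.{0}}
    (hlim : Order.IsSuccLimit i) (hi : i < ω1) :
    sig C α i ∩ Set.Iio ω1 = Set.Iio (del (sig C α i)) := by
  apply Set.Subset.antisymm
  · rintro x ⟨hx1, hx2⟩
    rw [sig_limit C α i hlim] at hx1
    simp only [Set.mem_iUnion] at hx1
    obtain ⟨⟨j, hj⟩, hx⟩ := hx1
    have hsj : Order.succ j < i := hlim.succ_lt hj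
    have hxle : x ≤ del (sig C α j) := le_csSup (aux_bdd _) ⟨hx, hx2⟩
    have h1 : del (sig C α j) < del (sig C α (Order.succ j)) :=
      del_strict hC hα (hsj.trans hi)
    have h2 : del (sig C α (Order.succ j)) ≤ del (sig C α i) :=
      del_mono hC hα hsj.le hi
    exact lt_of_le_of_lt hxle (lt_of_lt_of_le h1 h2)
  · intro x hx
    obtain ⟨y, ⟨hy1, hy2⟩, hxy⟩ :=
      exists_lt_of_lt_csSup ⟨0, sig_zero_mem hC hα hi⟩ hx
    rw [sig_limit C α i hlim] at hy1
    simp only [Set.mem_iUnion] at hy1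
    obtain ⟨⟨j, hj⟩, hyj⟩ := hy1
    have hjw : j < ω1 := hj.trans hi
    have hxd : x ≤ del (sig C α j) := le_trans hxy.le (le_csSup (aux_bdd _) ⟨hyj, hy2⟩)
    have hsj : Order.succ j < i := hlim.succ_lt hj
    have hmem : x ∈ sig C α (Order.succ j) :=
      (sig_step hC (sig_memC hC hα hjw)).2 (Or.inl (Or.inr hxd))
    exact ⟨sig_mono hC hα hsj.le hi hmem, lt_trans hxy hy2⟩

theorem E_club (hC : IsClubIn ω2 C) (hα : α < ω2) :
    IsClubBelow ω1 ((fun i => del (sig C α i)) '' {i | Order.IsSuccLimit i ∧ i < ω1}) := by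
  set E := (fun i => del (sig C α i)) '' {i | Order.IsSuccLimit i ∧ i < ω1} with hE
  refine ⟨?_, ?_, ?_⟩
  · rintro x ⟨i, ⟨_, hi⟩, rfl⟩
    exact del_lt hC hα hi
  · intro β hβ
    set i := β + Ordinal.omega0 with hidef
    have hil : Order.IsSuccLimit i := Ordinal.isSuccLimit_add β Ordinal.isSuccLimit_omega0
    have hi : i < ω1 := by
      rw [show ω1 = (Cardinal.aleph 1).ord from rfl, Cardinal.lt_ord, Ordinal.card_add]
      have h1 : β.card ≤ Cardinal.aleph0 := aux_card_le hβ
      have h2 : (Ordinal.omega0).card = Cardinal.aleph0 := Ordinal.card_omega0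
      calc β.card + (Ordinal.omega0).card ≤ Cardinal.aleph0 + Cardinal.aleph0 := by
            rw [h2]; exact add_le_add_left h1 _
        _ = Cardinal.aleph0 := Cardinal.aleph0_add_aleph0
        _ < Cardinal.aleph 1 := Cardinal.aleph0_lt_aleph_one
    refine ⟨del (sig C α i), ⟨i, ⟨hil, hi⟩, rfl⟩, ?_⟩
    exact le_trans (le_self_add (a := β) (b := Ordinal.omega0)) (del_ge hC hα i hi)
  · intro S hSE hSne hSlt
    by_cases hs : sSup S ∈ S
    · exact hSE hs
    · have hSub : ∀ x ∈ S, x < ω1 := by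
        intro x hx
        obtain ⟨i, ⟨_, hi⟩, rfl⟩ := hSE hx
        exact del_lt hC hα hi
      have hbS : BddAbove S := ⟨ω1, fun x hx => (hSub x hx).le⟩
      choose F hF using fun x : S => hSE x.2
      have hF1 : ∀ x : S, Order.IsSuccLimit (F x) ∧ F x < ω1 := fun x => (hF x).1
      have hF2 : ∀ x : S, del (sig C α (F x)) = x := fun x => (hF x).2
      have hFb : ∀ x : S, F x ≤ sSup S := by
        intro x
        have h1 : F x ≤ del (sig C α (F x)) := del_ge hC hα _ (hF1 x).2
        rw [hF2 x] at h1
        exact le_trans h1 (le_csSup hbS x.2)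
      have hbR : BddAbove (Set.range F) := ⟨sSup S, by rintro _ ⟨x, rfl⟩; exact hFb x⟩
      have hneR : (Set.range F).Nonempty := ⟨F ⟨hSne.choose, hSne.choose_spec⟩, Set.mem_range_self _⟩
      set istar := sSup (Set.range F) with histardef
      have histar : istar < ω1 :=
        lt_of_le_of_lt (csSup_le hneR (by rintro _ ⟨x, rfl⟩; exact hFb x)) hSlt
      have hxlt : ∀ x ∈ S, x < sSup S :=
        fun x hx => lt_of_le_of_ne (le_csSup hbS hx) (fun h => hs (h ▸ hx))
      have hcof : ∀ x : S, ∃ x' : S, F x < F x' := by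
        intro x
        obtain ⟨x', hx', hlt⟩ := exists_lt_of_lt_csSup hSne (hxlt x.1 x.2)
        refine ⟨⟨x', hx'⟩, ?_⟩
        by_contra h
        push_neg at h
        have hm := del_mono hC hα h (hF1 x).2
        rw [hF2 ⟨x', hx'⟩, hF2 x] at hm
        exact absurd hlt (not_lt.mpr hm)
      have histarlim : Order.IsSuccLimit istar := by
        rw [Ordinal.isSuccLimit_iff, Order.isSuccPrelimit_iff_succ_lt]
        constructor
        · intro h0
          obtain ⟨x, hx⟩ := hSne
          have hpos : 0 < F ⟨x, hx⟩ := (hF1 ⟨x, hx⟩).1.pos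
          have hle := le_csSup hbR (Set.mem_range_self (⟨x, hx⟩ : S))
          have hlt0 : (0 : Ordinal.{0}) < sSup (Set.range F) := lt_of_lt_of_le hpos hle
          rw [← histardef, h0] at hlt0
          exact lt_irrefl 0 hlt0
        · intro a ha
          obtain ⟨_, ⟨x, rfl⟩, hax⟩ := exists_lt_of_lt_csSup hneR ha
          obtain ⟨x', hxx'⟩ := hcof x
          have h1 : F x' ≤ istar := le_csSup hbR (Set.mem_range_self _)
          exact lt_of_le_of_lt (Order.succ_le_of_lt hax) (lt_of_lt_of_le hxx' h1)
      have hge2 : sSup S ≤ del (sig C α istar) := by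
        apply csSup_le hSne
        intro x hx
        have h1 : F ⟨x, hx⟩ ≤ istar := le_csSup hbR (Set.mem_range_self _)
        have h2 := del_mono hC hα h1 histar
        rw [hF2 ⟨x, hx⟩] at h2
        exact h2
      have hle2 : del (sig C α istar) ≤ sSup S := by
        apply csSup_le ⟨0, sig_zero_mem hC hα histar⟩
        rintro y ⟨hy1, hy2⟩
        rw [sig_limit C α istar histarlim] at hy1
        simp only [Set.mem_iUnion] at hy1
        obtain ⟨⟨j, hj⟩, hyj⟩ := hy1
        obtain ⟨_, ⟨x, rfl⟩, hjx⟩ := exists_lt_of_lt_csSup hneR hj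
        have h1 : y ≤ del (sig C α j) := le_csSup (aux_bdd _) ⟨hyj, hy2⟩
        have h2 := del_mono hC hα hjx.le (hF1 x).2
        rw [hF2 x] at h2
        exact le_trans h1 (le_trans h2 (le_csSup hbS x.2))
      exact ⟨istar, ⟨histarlim, histar⟩, le_antisymm hle2 hge2⟩

end Main
end Aux

theorem antichain_projective_stationary (A : Ordinal.{0} → Set Ordinal.{0})
    (hsub : ∀ α < ω2, ∀ x ∈ A α, x < ω1)
    (hstat : ∀ α < ω2, StatBelow ω1 (A α))
    (had : ∀ α < ω2, ∀ β < ω2, α ≠ β → ¬ StatBelow ω1 (A α ∩ A β))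
    (hmax : ∀ S : Set Ordinal.{0}, (∀ x ∈ S, x < ω1) → StatBelow ω1 S →
      ∃ α < ω2, StatBelow ω1 (S ∩ A α)) :
    ∀ B : Set Ordinal.{0}, (∀ x ∈ B, x < ω1) → StatBelow ω1 B →
      StatIn ω2 {σ | MemCtble ω2 σ ∧ ω1 ∈ σ ∧
        ∃ γ, MeetO1 σ γ ∧ γ ∈ B ∧ ∃ α ∈ σ, γ ∈ A α} := by
  intro B hB hBstat C hC
  obtain ⟨α, hα, hαstat⟩ := hmax B hB hBstat
  obtain ⟨γ, hγBA, i, ⟨hil, hiw⟩, rfl⟩ := hαstat _ (E_club hC hα)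
  have hmem0 : Set.Iio Ordinal.omega0 ∪ {ω1, α} ⊆ sig C α i := by
    refine Set.Subset.trans ?_ (sig_mono hC hα (zero_le : (0 : Ordinal.{0}) ≤ i) hiw)
    rw [sig_zero]
    exact (nxt_spec hC (seed0_mem hC hα)).2
  refine ⟨sig C α i, ⟨?_, ?_, ?_⟩, sig_memC hC hα hiw⟩
  · exact hC.1 _ (sig_memC hC hα hiw)
  · exact hmem0 (Or.inr (Or.inl rfl))
  · exact ⟨del (sig C α i), sig_meet hC hα hil hiw, hγBA.1,
      α, hmem0 (Or.inr (Or.inr rfl)), hγBA.2⟩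
end

section
/- Assume the nonstationary ideal on ω₁ is saturated. Then every stationary set 𝒯 ⊆ [ω₂]^ω is A-projective stationary for some stationary A ⊆ ω₁: there exists a stationary A ⊆ ω₁ such that for every stationary B ⊆ A, the set {σ ∈ 𝒯 : σ ∩ ω₁ ∈ B} is stationary in [ω₂]^ω. -/
namespace SGPS

lemma omega1_isLimit : Order.IsSuccLimit ω1 :=
  Cardinal.isSuccLimit_ord (Cardinal.aleph0_le_aleph 1)

lemma omega1_pos : 0 < ω1 := omega1_isLimit.pos

lemma omega1_lt_omega2 : ω1 < ω2 :=
  Cardinal.ord_lt_ord.2 (Cardinal.aleph_lt_aleph.2 one_lt_two)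

lemma succ_lt_omega1 {x : Ordinal.{0}} (h : x < ω1) : x + 1 < ω1 := by
  simpa using omega1_isLimit.succ_lt h

/-- countable sups below ω1 stay below ω1 -/
lemma sSup_lt_omega1 {s : Set Ordinal.{0}} (hc : s.Countable)
    (hs : ∀ x ∈ s, x < ω1) : sSup s < ω1 := by
  rcases s.eq_empty_or_nonempty with rfl | hne
  · simpa [csSup_empty] using omega1_pos
  · obtain ⟨g, rfl⟩ := hc.exists_eq_range hne
    have : iSup g < (Cardinal.aleph 1).ord :=
      (Cardinal.ord_aleph 1).symm ▸ Ordinal.iSup_lt_omega_one (fun n => (Cardinal.ord_aleph 1) ▸ hs _ ⟨n, rfl⟩)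
    exact this

lemma countable_Iio_of_lt_omega1 {d : Ordinal.{0}} (hd : d < ω1) :
    (Set.Iio d).Countable := by
  have h1 : d.card ≤ Cardinal.aleph0 := by
    have h2 : d.card < Cardinal.aleph 1 := Cardinal.lt_ord.1 hd
    rwa [← Cardinal.succ_aleph0, Order.lt_succ_iff] at h2
  rw [← Set.countable_coe_iff, ← Cardinal.mk_le_aleph0_iff]
  rw [Ordinal.mk_Iio_ordinal]
  exact (Cardinal.lift_le.2 h1).trans_eq Cardinal.lift_aleph0

lemma bddAbove_of_lt_omega1 {s : Set Ordinal.{0}} (hs : ∀ x ∈ s, x < ω1) :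
    BddAbove s := ⟨ω1, fun y hy => (hs y hy).le⟩

/-- bounded subsets of ω1 are nonstationary -/
lemma not_stat_of_bounded {B : Set Ordinal.{0}} {c : Ordinal.{0}} (hc : c < ω1)
    (hB : ∀ x ∈ B, x ≤ c) : ¬ StatBelow ω1 B := by
  intro hstat
  obtain ⟨x, hxB, hxC⟩ := hstat {x | c < x ∧ x < ω1} ⟨fun x hx => hx.2,
    fun β hβ => ⟨max β (c + 1), ⟨lt_of_lt_of_le (lt_add_one c) (le_max_right _ _),
      max_lt hβ (succ_lt_omega1 hc)⟩, le_max_left _ _⟩,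
    fun S hS hne hlt => ⟨lt_of_lt_of_le (hS hne.choose_spec).1
      (le_csSup (bddAbove_of_lt_omega1 (fun x hx => (hS hx).2)) hne.choose_spec), hlt⟩⟩
  exact absurd (hB x hxB) (not_le.2 hxC.1)

lemma union_Iio_eq (g : ℕ → Ordinal.{0}) :
    (⋃ n, Set.Iio (g n)) = Set.Iio (sSup (Set.range g)) := by
  ext x
  simp only [Set.mem_iUnion, Set.mem_Iio]
  constructor
  · rintro ⟨n, hn⟩
    exact lt_of_lt_of_le hn (le_csSup (Ordinal.bddAbove_range g) ⟨n, rfl⟩)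
  · intro hx
    by_contra h
    push_neg at h
    exact absurd (csSup_le (Set.range_nonempty g)
      (by rintro b ⟨n, rfl⟩; exact h n)) (not_le.2 hx)

/-- the trivial club in [ω2]^ω -/
lemma all_club : IsClubIn ω2 {σ | MemCtble ω2 σ} := by
  refine ⟨fun σ h => h, ?_, fun σ h => ⟨σ, h, subset_rfl⟩⟩
  intro f hf _
  exact ⟨Set.countable_iUnion (fun n => (hf n).1),
    ((hf 0).2.1).mono (Set.subset_iUnion f 0),
    fun x hx => by obtain ⟨n, hn⟩ := Set.mem_iUnion.1 hx; exact (hf n).2.2 x hn⟩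

lemma memCtble_iUnion_chain {f : ℕ → Set Ordinal.{0}}
    (hf : ∀ n, MemCtble ω2 (f n)) : MemCtble ω2 (⋃ n, f n) :=
  ⟨Set.countable_iUnion (fun n => (hf n).1),
    ((hf 0).2.1).mono (Set.subset_iUnion f 0),
    fun x hx => by obtain ⟨n, hn⟩ := Set.mem_iUnion.1 hx; exact (hf n).2.2 x hn⟩

end SGPS

namespace SGPS

open Classical in
/-- pick an element of D₀ above β -/
noncomputable def nD (D₀ : Set Ordinal.{0}) (β : Ordinal.{0}) : Ordinal.{0} :=
  if h : ∃ x ∈ D₀, β ≤ x then h.choose else 0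

lemma nD_spec {D₀ : Set Ordinal.{0}} (hD : IsClubBelow ω1 D₀) {β : Ordinal.{0}}
    (hβ : β < ω1) : nD D₀ β ∈ D₀ ∧ β ≤ nD D₀ β := by
  have h : ∃ x ∈ D₀, β ≤ x := hD.2.1 β hβ
  rw [nD, dif_pos h]
  exact ⟨h.choose_spec.1, h.choose_spec.2⟩

open Classical in
/-- extend s into the club 𝒞 γ -/
noncomputable def extC (𝒞 : Ordinal.{0} → Set (Set Ordinal.{0})) (γ : Ordinal.{0})
    (s : Set Ordinal.{0}) : Set Ordinal.{0} :=
  if h : ∃ τ ∈ 𝒞 γ, s ⊆ τ then h.choose else s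

lemma extC_sub (𝒞 : Ordinal.{0} → Set (Set Ordinal.{0})) (γ : Ordinal.{0})
    (s : Set Ordinal.{0}) : s ⊆ extC 𝒞 γ s := by
  rw [extC]
  split
  · next h => exact h.choose_spec.2
  · exact subset_rfl

lemma extC_mem {𝒞 : Ordinal.{0} → Set (Set Ordinal.{0})} {γ : Ordinal.{0}}
    (h𝒞 : IsClubIn ω2 (𝒞 γ)) {s : Set Ordinal.{0}} (hs : MemCtble ω2 s) :
    extC 𝒞 γ s ∈ 𝒞 γ := by
  have h : ∃ τ ∈ 𝒞 γ, s ⊆ τ := h𝒞.2.2 s hs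
  rw [extC, dif_pos h]
  exact h.choose_spec.1

open Classical in
/-- an enumeration of Iio d for countable nonzero d -/
noncomputable def enum (d : Ordinal.{0}) : ℕ → Ordinal.{0} :=
  if h : ∃ g : ℕ → Ordinal.{0}, Set.Iio d = Set.range g then h.choose else fun _ => 0

lemma enum_spec {d : Ordinal.{0}} (h0 : 0 < d) (hd : d < ω1) :
    Set.Iio d = Set.range (enum d) := by
  have h : ∃ g : ℕ → Ordinal.{0}, Set.Iio d = Set.range g :=
    (countable_Iio_of_lt_omega1 hd).exists_eq_range ⟨0, h0⟩
  rw [enum, dif_pos h]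
  exact h.choose_spec

variable (D₀ : Set Ordinal.{0}) (𝒞 : Ordinal.{0} → Set (Set Ordinal.{0}))
  (σ0 : Set Ordinal.{0})

/-- the recursive construction: state = (current set, history of D₀-elements) -/
noncomputable def FS : ℕ → Set Ordinal.{0} × (ℕ → Ordinal.{0})
  | 0 => (σ0 ∪ Set.Iio (nD D₀ 1), fun _ => nD D₀ 1)
  | (n+1) =>
    let st := FS n
    let γ := enum (st.2 (Nat.unpair n).1) (Nat.unpair n).2
    let τ := extC 𝒞 γ st.1
    let d' := nD D₀ (max (sSup (τ ∩ Set.Iio ω1) + 1) (st.2 n + 1))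
    (τ ∪ Set.Iio d', fun i => if i = n + 1 then d' else st.2 i)

noncomputable def dn (n : ℕ) : Ordinal.{0} := (FS D₀ 𝒞 σ0 n).2 n
noncomputable def sn (n : ℕ) : Set Ordinal.{0} := (FS D₀ 𝒞 σ0 n).1
noncomputable def gst (n : ℕ) : Ordinal.{0} :=
  enum (dn D₀ 𝒞 σ0 (Nat.unpair n).1) (Nat.unpair n).2
noncomputable def tn (n : ℕ) : Set Ordinal.{0} :=
  extC 𝒞 (gst D₀ 𝒞 σ0 n) (sn D₀ 𝒞 σ0 n)

lemma FS_coherent : ∀ n i, i ≤ n → (FS D₀ 𝒞 σ0 n).2 i = dn D₀ 𝒞 σ0 i := by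
  intro n
  induction n with
  | zero => intro i hi; interval_cases i; rfl
  | succ n ih =>
    intro i hi
    rcases Nat.eq_or_lt_of_le hi with rfl | hlt
    · rfl
    · have hi' : i ≤ n := Nat.lt_succ_iff.1 hlt
      have : (FS D₀ 𝒞 σ0 (n+1)).2 i = (FS D₀ 𝒞 σ0 n).2 i := by
        show (if i = n + 1 then _ else (FS D₀ 𝒞 σ0 n).2 i) = _
        rw [if_neg (Nat.ne_of_lt hlt)]
      rw [this, ih i hi']

lemma sn_zero : sn D₀ 𝒞 σ0 0 = σ0 ∪ Set.Iio (nD D₀ 1) := rfl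
lemma dn_zero : dn D₀ 𝒞 σ0 0 = nD D₀ 1 := rfl

lemma dn_succ (n : ℕ) :
    dn D₀ 𝒞 σ0 (n+1) =
      nD D₀ (max (sSup (tn D₀ 𝒞 σ0 n ∩ Set.Iio ω1) + 1) (dn D₀ 𝒞 σ0 n + 1)) := by
  show (if n + 1 = n + 1 then _ else _) = _
  rw [if_pos rfl]
  have h1 : (FS D₀ 𝒞 σ0 n).2 (Nat.unpair n).1 = dn D₀ 𝒞 σ0 (Nat.unpair n).1 :=
    FS_coherent D₀ 𝒞 σ0 n _ (Nat.unpair_left_le n)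
  have h2 : (FS D₀ 𝒞 σ0 n).2 n = dn D₀ 𝒞 σ0 n := rfl
  rw [h1, h2]
  rfl

lemma sn_succ (n : ℕ) :
    sn D₀ 𝒞 σ0 (n+1) = tn D₀ 𝒞 σ0 n ∪ Set.Iio (dn D₀ 𝒞 σ0 (n+1)) := by
  have h1 : (FS D₀ 𝒞 σ0 n).2 (Nat.unpair n).1 = dn D₀ 𝒞 σ0 (Nat.unpair n).1 :=
    FS_coherent D₀ 𝒞 σ0 n _ (Nat.unpair_left_le n)
  show extC 𝒞 (enum ((FS D₀ 𝒞 σ0 n).2 (Nat.unpair n).1) (Nat.unpair n).2) _ ∪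
      Set.Iio _ = _
  rw [h1, dn_succ]
  rfl

end SGPS

namespace SGPS

variable (D₀ : Set Ordinal.{0}) (𝒞 : Ordinal.{0} → Set (Set Ordinal.{0}))
  (σ0 : Set Ordinal.{0})

variable {D₀ 𝒞 σ0} in
lemma FS_inv (hD : IsClubBelow ω1 D₀) (h𝒞 : ∀ γ, IsClubIn ω2 (𝒞 γ))
    (hσ0 : MemCtble ω2 σ0) :
    ∀ n, MemCtble ω2 (sn D₀ 𝒞 σ0 n) ∧ dn D₀ 𝒞 σ0 n ∈ D₀ ∧
      1 ≤ dn D₀ 𝒞 σ0 n ∧ dn D₀ 𝒞 σ0 n < ω1 := by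
  have hone : (1 : Ordinal.{0}) < ω1 := by
    simpa using succ_lt_omega1 omega1_pos
  have hmem_of : ∀ d : Ordinal.{0}, d < ω1 → ∀ s, MemCtble ω2 s →
      MemCtble ω2 (s ∪ Set.Iio d) := by
    intro d hd s hs
    refine ⟨hs.1.union (countable_Iio_of_lt_omega1 hd), hs.2.1.mono Set.subset_union_left,
      ?_⟩
    rintro x (hx | hx)
    · exact hs.2.2 x hx
    · exact lt_trans (lt_trans hx hd) omega1_lt_omega2
  intro n
  induction n with
  | zero =>
    have h := nD_spec hD hone
    have hlt : nD D₀ 1 < ω1 := hD.1 _ h.1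
    exact ⟨by rw [sn_zero]; exact hmem_of _ hlt _ hσ0, h.1, h.2, hlt⟩
  | succ n ih =>
    obtain ⟨hsn, hdD, hd1, hdlt⟩ := ih
    have htn_mem : tn D₀ 𝒞 σ0 n ∈ 𝒞 (gst D₀ 𝒞 σ0 n) := extC_mem (h𝒞 _) hsn
    have htn : MemCtble ω2 (tn D₀ 𝒞 σ0 n) := (h𝒞 _).1 _ htn_mem
    have hsup : sSup (tn D₀ 𝒞 σ0 n ∩ Set.Iio ω1) < ω1 :=
      sSup_lt_omega1 (htn.1.mono Set.inter_subset_left) (fun x hx => hx.2)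
    have hβ : max (sSup (tn D₀ 𝒞 σ0 n ∩ Set.Iio ω1) + 1) (dn D₀ 𝒞 σ0 n + 1) < ω1 :=
      max_lt (succ_lt_omega1 hsup) (succ_lt_omega1 hdlt)
    have h := nD_spec hD hβ
    rw [← dn_succ] at h
    have hlt : dn D₀ 𝒞 σ0 (n+1) < ω1 := hD.1 _ h.1
    refine ⟨?_, h.1, ?_, hlt⟩
    · rw [sn_succ]
      exact hmem_of _ hlt _ htn
    · exact le_trans le_add_self
        (le_trans (le_max_right _ _) h.2)

variable {D₀ 𝒞 σ0} in
lemma dn_lt_dn_succ (hD : IsClubBelow ω1 D₀) (h𝒞 : ∀ γ, IsClubIn ω2 (𝒞 γ))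
    (hσ0 : MemCtble ω2 σ0) (n : ℕ) : dn D₀ 𝒞 σ0 n < dn D₀ 𝒞 σ0 (n+1) := by
  obtain ⟨hsn, hdD, hd1, hdlt⟩ := FS_inv hD h𝒞 hσ0 n
  have htn : MemCtble ω2 (tn D₀ 𝒞 σ0 n) := (h𝒞 _).1 _ (extC_mem (h𝒞 _) hsn)
  have hsup : sSup (tn D₀ 𝒞 σ0 n ∩ Set.Iio ω1) < ω1 :=
    sSup_lt_omega1 (htn.1.mono Set.inter_subset_left) (fun x hx => hx.2)
  have hβ : max (sSup (tn D₀ 𝒞 σ0 n ∩ Set.Iio ω1) + 1) (dn D₀ 𝒞 σ0 n + 1) < ω1 :=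
    max_lt (succ_lt_omega1 hsup) (succ_lt_omega1 hdlt)
  have h := nD_spec hD hβ
  rw [← dn_succ] at h
  calc dn D₀ 𝒞 σ0 n < dn D₀ 𝒞 σ0 n + 1 := lt_add_one _
    _ ≤ _ := le_trans (le_max_right _ _) h.2

variable {D₀ 𝒞 σ0} in
lemma sup_lt_dn_succ (hD : IsClubBelow ω1 D₀) (h𝒞 : ∀ γ, IsClubIn ω2 (𝒞 γ))
    (hσ0 : MemCtble ω2 σ0) (n : ℕ) {x : Ordinal.{0}}
    (hx : x ∈ tn D₀ 𝒞 σ0 n) (hx1 : x < ω1) : x < dn D₀ 𝒞 σ0 (n+1) := by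
  obtain ⟨hsn, hdD, hd1, hdlt⟩ := FS_inv hD h𝒞 hσ0 n
  have htn : MemCtble ω2 (tn D₀ 𝒞 σ0 n) := (h𝒞 _).1 _ (extC_mem (h𝒞 _) hsn)
  have hsup : sSup (tn D₀ 𝒞 σ0 n ∩ Set.Iio ω1) < ω1 :=
    sSup_lt_omega1 (htn.1.mono Set.inter_subset_left) (fun x hx => hx.2)
  have hβ : max (sSup (tn D₀ 𝒞 σ0 n ∩ Set.Iio ω1) + 1) (dn D₀ 𝒞 σ0 n + 1) < ω1 :=
    max_lt (succ_lt_omega1 hsup) (succ_lt_omega1 hdlt)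
  have h := nD_spec hD hβ
  rw [← dn_succ] at h
  have hxle : x ≤ sSup (tn D₀ 𝒞 σ0 n ∩ Set.Iio ω1) :=
    le_csSup (bddAbove_of_lt_omega1 (fun y hy => hy.2)) ⟨hx, hx1⟩
  calc x ≤ sSup (tn D₀ 𝒞 σ0 n ∩ Set.Iio ω1) := hxle
    _ < sSup (tn D₀ 𝒞 σ0 n ∩ Set.Iio ω1) + 1 := lt_add_one _
    _ ≤ _ := le_trans (le_max_left _ _) h.2

lemma sn_subset_tn (n : ℕ) : sn D₀ 𝒞 σ0 n ⊆ tn D₀ 𝒞 σ0 n := extC_sub _ _ _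

lemma sn_mono : Monotone (sn D₀ 𝒞 σ0) := by
  apply monotone_nat_of_le_succ
  intro n
  rw [sn_succ]
  exact le_trans (sn_subset_tn D₀ 𝒞 σ0 n) Set.subset_union_left

lemma Iio_dn_subset (n : ℕ) : Set.Iio (dn D₀ 𝒞 σ0 n) ⊆ sn D₀ 𝒞 σ0 n := by
  cases n with
  | zero => rw [sn_zero, dn_zero]; exact Set.subset_union_right
  | succ n => rw [sn_succ]; exact Set.subset_union_right

end SGPS

namespace SGPS

lemma big_club {D₀ : Set Ordinal.{0}} (hD : IsClubBelow ω1 D₀)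
    {𝒞 : Ordinal.{0} → Set (Set Ordinal.{0})} (h𝒞 : ∀ γ, IsClubIn ω2 (𝒞 γ)) :
    IsClubIn ω2 {σ | MemCtble ω2 σ ∧ (∃ δ ∈ D₀, σ ∩ Set.Iio ω1 = Set.Iio δ) ∧
      ∀ γ ∈ σ, γ < ω1 → σ ∈ 𝒞 γ} := by
  refine ⟨fun σ h => h.1, ?_, ?_⟩
  · -- closure under increasing ω-chains
    intro f hf hch
    have hmono : Monotone f := monotone_nat_of_le_succ hch
    refine ⟨memCtble_iUnion_chain (fun n => (hf n).1), ?_, ?_⟩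
    · choose δ hδD hδeq using fun n => (hf n).2.1
      refine ⟨sSup (Set.range δ),
        hD.2.2 _ (by rintro x ⟨n, rfl⟩; exact hδD n) ⟨δ 0, ⟨0, rfl⟩⟩
          (sSup_lt_omega1 (Set.countable_range δ)
            (by rintro x ⟨n, rfl⟩; exact hD.1 _ (hδD n))), ?_⟩
      rw [Set.iUnion_inter]
      calc (⋃ n, f n ∩ Set.Iio ω1) = ⋃ n, Set.Iio (δ n) :=
            Set.iUnion_congr fun n => hδeq n
        _ = _ := union_Iio_eq δ
    · intro γ hγ hγ1
      obtain ⟨m, hm⟩ := Set.mem_iUnion.1 hγ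
      have hun : (⋃ k, f (m + k)) = ⋃ n, f n := by
        apply Set.Subset.antisymm
        · exact Set.iUnion_subset fun k => Set.subset_iUnion f (m + k)
        · exact Set.iUnion_subset fun n =>
            le_trans (hmono (Nat.le_add_left n m))
              (Set.subset_iUnion (fun k => f (m + k)) n)
      rw [← hun]
      refine (h𝒞 γ).2.1 (fun k => f (m + k))
        (fun k => (hf (m + k)).2.2 γ (hmono (Nat.le_add_right m k) hm) hγ1)
        (fun k => ?_)
      show f (m + k) ⊆ f (m + (k + 1))
      rw [← Nat.add_assoc]
      exact hch (m + k)
  · -- cofinality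
    intro σ0 hσ0
    have hinv := FS_inv hD h𝒞 hσ0
    have hsmono := sn_mono D₀ 𝒞 σ0
    set δ := sSup (Set.range (dn D₀ 𝒞 σ0)) with hδdef
    have hδlt : δ < ω1 := sSup_lt_omega1 (Set.countable_range _)
      (by rintro x ⟨n, rfl⟩; exact (hinv n).2.2.2)
    have hδD0 : δ ∈ D₀ := hD.2.2 _ (by rintro x ⟨n, rfl⟩; exact (hinv n).2.1)
      (Set.range_nonempty _) hδlt
    have hinter : (⋃ n, sn D₀ 𝒞 σ0 n) ∩ Set.Iio ω1 = Set.Iio δ := by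
      apply Set.Subset.antisymm
      · rintro x ⟨hx, hx1⟩
        obtain ⟨n, hn⟩ := Set.mem_iUnion.1 hx
        have h1 : x < dn D₀ 𝒞 σ0 (n+1) :=
          sup_lt_dn_succ hD h𝒞 hσ0 n (sn_subset_tn D₀ 𝒞 σ0 n hn) hx1
        exact lt_of_lt_of_le h1 (le_csSup (Ordinal.bddAbove_range _) ⟨n+1, rfl⟩)
      · intro x hx
        have hex : ∃ n, x < dn D₀ 𝒞 σ0 n := by
          by_contra h
          push_neg at h
          exact absurd (csSup_le (Set.range_nonempty _)
            (by rintro b ⟨n, rfl⟩; exact h n)) (not_le.2 hx)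
        obtain ⟨n, hn⟩ := hex
        exact ⟨Set.mem_iUnion.2 ⟨n, Iio_dn_subset D₀ 𝒞 σ0 n hn⟩,
          lt_trans hn (hinv n).2.2.2⟩
    refine ⟨⋃ n, sn D₀ 𝒞 σ0 n,
      ⟨memCtble_iUnion_chain (fun n => (hinv n).1), ⟨δ, hδD0, hinter⟩, ?_⟩,
      le_trans (by rw [sn_zero]; exact Set.subset_union_left)
        (Set.subset_iUnion _ 0)⟩
    intro γ hγ hγ1
    have hγδ : γ < δ := by
      have : γ ∈ Set.Iio δ := by rw [← hinter]; exact ⟨hγ, hγ1⟩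
      exact this
    have hdmono : StrictMono (dn D₀ 𝒞 σ0) :=
      strictMono_nat_of_lt_succ (dn_lt_dn_succ hD h𝒞 hσ0)
    obtain ⟨i₀, hi₀⟩ : ∃ i, γ < dn D₀ 𝒞 σ0 i := by
      by_contra h
      push_neg at h
      exact absurd (csSup_le (Set.range_nonempty _)
        (by rintro b ⟨n, rfl⟩; exact h n)) (not_le.2 hγδ)
    have hPinf : {n | gst D₀ 𝒞 σ0 n = γ}.Infinite := by
      have hstep : ∀ N : ℕ, ∃ n, N < n ∧ gst D₀ 𝒞 σ0 n = γ := by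
        intro N
        set i := max i₀ (N + 1) with hidef
        have hγi : γ < dn D₀ 𝒞 σ0 i := lt_of_lt_of_le hi₀
          (hdmono.monotone (le_max_left _ _))
        have h0i : 0 < dn D₀ 𝒞 σ0 i :=
          lt_of_lt_of_le zero_lt_one (hinv i).2.2.1
        have henum := enum_spec h0i (hinv i).2.2.2
        have : γ ∈ Set.range (enum (dn D₀ 𝒞 σ0 i)) := by
          rw [← henum]; exact hγi
        obtain ⟨j, hj⟩ := this
        refine ⟨Nat.pair i j, ?_, ?_⟩
        · exact lt_of_lt_of_le (Nat.lt_succ_self N)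
            (le_trans (le_max_right i₀ (N+1)) (Nat.left_le_pair i j))
        · show enum (dn D₀ 𝒞 σ0 (Nat.unpair (Nat.pair i j)).1)
            (Nat.unpair (Nat.pair i j)).2 = γ
          rw [Nat.unpair_pair]
          exact hj
      by_contra hfin
      rw [Set.not_infinite] at hfin
      obtain ⟨b, hb⟩ := hfin.bddAbove
      obtain ⟨n, hn, hgst⟩ := hstep b
      exact absurd (hb hgst) (not_le.2 hn)
    set p := fun n => gst D₀ 𝒞 σ0 n = γ with hpdef
    have hPinf' : (setOf p).Infinite := hPinf
    have hgC : ∀ k, tn D₀ 𝒞 σ0 (Nat.nth p k) ∈ 𝒞 γ := by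
      intro k
      have hk : gst D₀ 𝒞 σ0 (Nat.nth p k) = γ := Nat.nth_mem_of_infinite hPinf' k
      show extC 𝒞 (gst D₀ 𝒞 σ0 (Nat.nth p k)) (sn D₀ 𝒞 σ0 (Nat.nth p k)) ∈ 𝒞 γ
      rw [hk]
      exact extC_mem (h𝒞 γ) (hinv (Nat.nth p k)).1
    have htn_sub_sn : ∀ m, tn D₀ 𝒞 σ0 m ⊆ sn D₀ 𝒞 σ0 (m + 1) := by
      intro m
      rw [sn_succ]
      exact Set.subset_union_left
    have hgchain : ∀ k, tn D₀ 𝒞 σ0 (Nat.nth p k) ⊆ tn D₀ 𝒞 σ0 (Nat.nth p (k+1)) := by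
      intro k
      refine le_trans (htn_sub_sn _) (le_trans (hsmono ?_) (sn_subset_tn D₀ 𝒞 σ0 _))
      exact Nat.succ_le_of_lt (Nat.nth_strictMono hPinf' (Nat.lt_succ_self k))
    have hgunion : (⋃ k, tn D₀ 𝒞 σ0 (Nat.nth p k)) = ⋃ n, sn D₀ 𝒞 σ0 n := by
      apply Set.Subset.antisymm
      · exact Set.iUnion_subset fun k =>
          le_trans (htn_sub_sn _) (Set.subset_iUnion _ (Nat.nth p k + 1))
      · refine Set.iUnion_subset fun n => ?_
        refine le_trans (hsmono ((Nat.nth_strictMono hPinf').le_apply))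
          (le_trans (sn_subset_tn D₀ 𝒞 σ0 _)
            (Set.subset_iUnion (fun k => tn D₀ 𝒞 σ0 (Nat.nth p k)) n))
    have := (h𝒞 γ).2.1 (fun k => tn D₀ 𝒞 σ0 (Nat.nth p k)) hgC hgchain
    rwa [hgunion] at this

end SGPS


open SGPS

theorem saturation_gives_projective_stationarity
    (hsat : ∀ 𝒜 : Set (Set Ordinal.{0}),
      (∀ A ∈ 𝒜, (∀ x ∈ A, x < ω1) ∧ StatBelow ω1 A) →
      (∀ A ∈ 𝒜, ∀ B ∈ 𝒜, A ≠ B → ¬ StatBelow ω1 (A ∩ B)) →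
      ∃ f : ↥𝒜 → ↥(Set.Iio ω1), Function.Injective f)
    (𝒯 : Set (Set Ordinal.{0}))
    (h𝒯sub : ∀ σ ∈ 𝒯, MemCtble ω2 σ) (h𝒯 : StatIn ω2 𝒯) :
    ∃ A : Set Ordinal.{0}, (∀ x ∈ A, x < ω1) ∧ StatBelow ω1 A ∧
      ∀ B ⊆ A, StatBelow ω1 B →
        StatIn ω2 {σ | σ ∈ 𝒯 ∧ ∃ γ ∈ B, MeetO1 σ γ} := by
  classical
  by_contra hcon
  push_neg at hcon
  set TB : Set Ordinal.{0} → Set (Set Ordinal.{0}) :=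
    fun B => {σ | σ ∈ 𝒯 ∧ ∃ γ ∈ B, MeetO1 σ γ} with hTBdef
  set I : Set (Set Ordinal.{0}) :=
    {B | (∀ x ∈ B, x < ω1) ∧ StatBelow ω1 B ∧ ¬ StatIn ω2 (TB B)} with hIdef
  set Coll : Set (Set (Set Ordinal.{0})) :=
    {𝒜 | 𝒜 ⊆ I ∧ ∀ A ∈ 𝒜, ∀ B ∈ 𝒜, A ≠ B → ¬ StatBelow ω1 (A ∩ B)} with hColldef
  have hz : ∀ c ⊆ Coll, IsChain (· ⊆ ·) c → ∃ ub ∈ Coll, ∀ s ∈ c, s ⊆ ub := by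
    intro c hc hchain
    refine ⟨⋃₀ c, ⟨?_, ?_⟩, fun s hs => Set.subset_sUnion_of_mem hs⟩
    · rintro A ⟨x, hxc, hAx⟩
      exact (hc hxc).1 hAx
    · rintro A ⟨x, hxc, hAx⟩ B ⟨y, hyc, hBy⟩ hne
      rcases eq_or_ne x y with rfl | hxy
      · exact (hc hxc).2 A hAx B hBy hne
      · rcases hchain hxc hyc hxy with hsub | hsub
        · exact (hc hyc).2 A (hsub hAx) B hBy hne
        · exact (hc hxc).2 A hAx B (hsub hBy) hne
  obtain ⟨𝒜, h𝒜⟩ := zorn_subset Coll hz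
  have h𝒜I : 𝒜 ⊆ I := h𝒜.1.1
  have h𝒜anti := h𝒜.1.2
  obtain ⟨f, hfinj⟩ := hsat 𝒜 (fun A hA => ⟨(h𝒜I hA).1, (h𝒜I hA).2.1⟩) h𝒜anti
  -- for each B, a club avoiding TB B when TB B is nonstationary
  have hclA : ∀ B : Set Ordinal.{0}, ∃ C, IsClubIn ω2 C ∧
      (¬ StatIn ω2 (TB B) → TB B ∩ C = ∅) := by
    intro B
    by_cases h : StatIn ω2 (TB B)
    · exact ⟨{σ | MemCtble ω2 σ}, all_club, fun h' => absurd h h'⟩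
    · have h' := h
      rw [StatIn] at h'
      push_neg at h'
      obtain ⟨C, hC, hCne⟩ := h'
      exact ⟨C, hC, fun _ => hCne⟩
  choose clA hclA_club hclA_disj using hclA
  -- the indexed family of clubs
  have h𝒞all : ∀ γ : Ordinal.{0}, ∃ Cγ, IsClubIn ω2 Cγ ∧
      ∀ a : ↥𝒜, ((f a : ↥(Set.Iio ω1)) : Ordinal.{0}) = γ →
        TB (a : Set Ordinal.{0}) ∩ Cγ = ∅ := by
    intro γ
    by_cases h : ∃ a : ↥𝒜, ((f a : ↥(Set.Iio ω1)) : Ordinal.{0}) = γ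
    · obtain ⟨a, ha⟩ := h
      refine ⟨clA (a : Set Ordinal.{0}), hclA_club _, ?_⟩
      intro a' ha'
      have heq : a' = a := hfinj (Subtype.ext (ha'.trans ha.symm))
      rw [heq]
      exact hclA_disj _ ((h𝒜I a.2).2.2)
    · exact ⟨{σ | MemCtble ω2 σ}, all_club, fun a ha => absurd ⟨a, ha⟩ h⟩
  choose 𝒞 h𝒞club h𝒞disj using h𝒞all
  -- the complement of the diagonal union is nonstationary
  set S : Set Ordinal.{0} := {δ | δ < ω1 ∧ ∀ a : ↥𝒜,
    ((f a : ↥(Set.Iio ω1)) : Ordinal.{0}) < δ → δ ∉ (a : Set Ordinal.{0})} with hSdef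
  have hSnotstat : ¬ StatBelow ω1 S := by
    intro hSstat
    obtain ⟨B, hBS, hBstat, hBbad⟩ := hcon S (fun x hx => hx.1) hSstat
    have hBI : B ∈ I := ⟨fun x hx => (hBS hx).1, hBstat, hBbad⟩
    have hbdd : ∀ a : ↥𝒜, ∀ δ, δ ∈ B → δ ∈ (a : Set Ordinal.{0}) →
        δ ≤ ((f a : ↥(Set.Iio ω1)) : Ordinal.{0}) := by
      intro a δ hδB hδa
      by_contra h
      push_neg at h
      exact absurd hδa ((hBS hδB).2 a h)
    have hBnot : B ∉ 𝒜 := by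
      intro hBA
      exact not_stat_of_bounded (f ⟨B, hBA⟩).2
        (fun x hx => hbdd ⟨B, hBA⟩ x hx hx) hBstat
    have hColl : insert B 𝒜 ∈ Coll := by
      constructor
      · rintro X (rfl | hX)
        · exact hBI
        · exact h𝒜I hX
      · rintro X (rfl | hX) Y (rfl | hY) hne
        · exact absurd rfl hne
        · exact not_stat_of_bounded (f ⟨Y, hY⟩).2
            (fun x hx => hbdd ⟨Y, hY⟩ x hx.1 hx.2)
        · exact not_stat_of_bounded (f ⟨X, hX⟩).2
            (fun x hx => hbdd ⟨X, hX⟩ x hx.2 hx.1)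
        · exact h𝒜anti X hX Y hY hne
    exact hBnot (h𝒜.2 hColl (Set.subset_insert B 𝒜) (Set.mem_insert B 𝒜))
  have hSex : ∃ D, IsClubBelow ω1 D ∧ S ∩ D = ∅ := by
    rw [StatBelow] at hSnotstat
    push_neg at hSnotstat
    obtain ⟨D, hD, hne⟩ := hSnotstat
    exact ⟨D, hD, hne⟩
  obtain ⟨D₀, hD₀, hSD₀⟩ := hSex
  obtain ⟨σ, hσT, hσmem, ⟨δ, hδD, hδeq⟩, hσall⟩ := h𝒯 _ (big_club hD₀ h𝒞club)
  have hδlt : δ < ω1 := hD₀.1 δ hδD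
  have hδnS : δ ∉ S := fun h => Set.eq_empty_iff_forall_notMem.1 hSD₀ δ ⟨h, hδD⟩
  have hex : ∃ a : ↥𝒜, ((f a : ↥(Set.Iio ω1)) : Ordinal.{0}) < δ ∧
      δ ∈ (a : Set Ordinal.{0}) := by
    by_contra h
    push_neg at h
    exact hδnS ⟨hδlt, fun a ha => h a ha⟩
  obtain ⟨a, hfa, hδa⟩ := hex
  have hγσ : ((f a : ↥(Set.Iio ω1)) : Ordinal.{0}) ∈ σ := by
    have h1 : ((f a : ↥(Set.Iio ω1)) : Ordinal.{0}) ∈ σ ∩ Set.Iio ω1 := by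
      rw [hδeq]; exact hfa
    exact h1.1
  have hσC : σ ∈ 𝒞 ((f a : ↥(Set.Iio ω1)) : Ordinal.{0}) := hσall _ hγσ (f a).2
  have hσTB : σ ∈ TB (a : Set Ordinal.{0}) := ⟨hσT, δ, hδa, hδeq⟩
  exact Set.eq_empty_iff_forall_notMem.1 (h𝒞disj _ a rfl) σ ⟨hσTB, hσC⟩
end
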